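/- Let 1 ≤ k ≤ n, let g : (ℂ^n)^4 → ℂ be quadrilinear of curvature type satisfying the Kähler-type symmetries, and let D > 0. Assume that for every k-dimensional complex subspace Σ' ⊆ ℂ^n with orthonormal basis {E'_1,…,E'_k} and every X ∈ Σ', the (real) number Σ_{i=1}^k g(X,X,E'_i,E'_i) satisfies Σ_{i=1}^k g(X,X,E'_i,E'_i) ≥ D·‖X‖². Let Σ be a k-dimensional complex subspace minimizing s among all k-dimensional complex subspaces. Then for every orthonormal basis {E_1,…,E_k} of Σ and every X ∈ ℂ^n, Σ_{i=1}^k g(E_i,E_i,X,X) ≥ (kD/(k+1)) · ‖X‖². -/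

import Mathlib

/-- `g` is quadrilinear of curvature type: linear in the first and third variables,
conjugate-linear in the second and fourth. -/
def CurvatureType {H : Type*} [AddCommGroup H] [Module ℂ H] (g : H → H → H → H → ℂ) : Prop :=
  (∀ x x' y z w, g (x + x') y z w = g x y z w + g x' y z w) ∧
  (∀ (c : ℂ) (x y z w : H), g (c • x) y z w = c * g x y z w) ∧
  (∀ x y y' z w, g x (y + y') z w = g x y z w + g x y' z w) ∧
  (∀ (c : ℂ) (x y z w : H), g x (c • y) z w = (starRingEnd ℂ) c * g x y z w) ∧
  (∀ x y z z' w, g x y (z + z') w = g x y z w + g x y z' w) ∧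
  (∀ (c : ℂ) (x y z w : H), g x y (c • z) w = c * g x y z w) ∧
  (∀ x y z w w', g x y z (w + w') = g x y z w + g x y z w') ∧
  (∀ (c : ℂ) (x y z w : H), g x y z (c • w) = (starRingEnd ℂ) c * g x y z w)

/-- The Kähler-type symmetries of a curvature-type quadrilinear map. -/
def KahlerSymmetries {H : Type*} [AddCommGroup H] [Module ℂ H] (g : H → H → H → H → ℂ) : Prop :=
  (∀ x y z w, g x y z w = g z y x w) ∧
  (∀ x y z w, g x y z w = (starRingEnd ℂ) (g y x w z))

variable {H : Type*} [NormedAddCommGroup H] [InnerProductSpace ℂ H]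

section Main
variable {g : H → H → H → H → ℂ}

noncomputable def BCv (g : H → H → H → H → ℂ) {k : ℕ} (e : Fin k → H) (ν : Fin k) (Z : H) : ℂ :=
  (∑ j ∈ Finset.univ \ {ν}, (g (e ν) Z (e j) (e j) + g Z (e ν) (e j) (e j) +
      g (e j) (e j) (e ν) Z + g (e j) (e j) Z (e ν))) +
    (g (e ν) (e ν) (e ν) Z + g (e ν) (e ν) Z (e ν) + g (e ν) Z (e ν) (e ν) +
      g Z (e ν) (e ν) (e ν))

noncomputable def CCv (g : H → H → H → H → ℂ) {k : ℕ} (e : Fin k → H) (ν : Fin k) (Z : H) : ℂ :=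
  ∑ j ∈ Finset.univ \ {ν}, (g Z Z (e j) (e j) + g (e j) (e j) Z Z -
      g (e ν) (e ν) (e j) (e j) - g (e j) (e j) (e ν) (e ν))

noncomputable def X1v (g : H → H → H → H → ℂ) {k : ℕ} (e : Fin k → H) (ν : Fin k) (Z : H) : ℂ :=
  g (e ν) (e ν) (e ν) Z + g (e ν) (e ν) Z (e ν) + g (e ν) Z (e ν) (e ν) + g Z (e ν) (e ν) (e ν)

noncomputable def X2v (g : H → H → H → H → ℂ) {k : ℕ} (e : Fin k → H) (ν : Fin k) (Z : H) : ℂ :=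
  g (e ν) (e ν) Z Z + g (e ν) Z (e ν) Z + g (e ν) Z Z (e ν) + g Z (e ν) (e ν) Z +
    g Z (e ν) Z (e ν) + g Z Z (e ν) (e ν)

noncomputable def X3v (g : H → H → H → H → ℂ) {k : ℕ} (e : Fin k → H) (ν : Fin k) (Z : H) : ℂ :=
  g (e ν) Z Z Z + g Z (e ν) Z Z + g Z Z (e ν) Z + g Z Z Z (e ν)

lemma expand12 (hg : CurvatureType g) (c s : ℝ) (a b x y : H) :
    g ((c:ℂ) • a + (s:ℂ) • b) ((c:ℂ) • a + (s:ℂ) • b) x y =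
      (c:ℂ)^2 * g a a x y + (c*s : ℝ) * (g a b x y + g b a x y) + (s:ℂ)^2 * g b b x y := by
  obtain ⟨a1, m1, a2, m2, a3, m3, a4, m4⟩ := hg
  simp only [a1, a2, m1, m2, Complex.conj_ofReal]
  push_cast; ring

lemma expand34 (hg : CurvatureType g) (c s : ℝ) (a b x y : H) :
    g x y ((c:ℂ) • a + (s:ℂ) • b) ((c:ℂ) • a + (s:ℂ) • b) =
      (c:ℂ)^2 * g x y a a + (c*s : ℝ) * (g x y a b + g x y b a) + (s:ℂ)^2 * g x y b b := by
  obtain ⟨a1, m1, a2, m2, a3, m3, a4, m4⟩ := hg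
  simp only [a3, a4, m3, m4, Complex.conj_ofReal]
  push_cast; ring

lemma key_identity (hg : CurvatureType g) {k : ℕ} (ν : Fin k)
    (e : Fin k → H) (Z : H) (c s : ℝ) (hcs : c ^ 2 + s ^ 2 = 1)
    (F : Fin k → H) (hFν : F ν = (c:ℂ) • (e ν) + (s:ℂ) • Z)
    (hFo : ∀ i, i ≠ ν → F i = e i) :
    (∑ i : Fin k, ∑ j : Fin k, g (F i) (F i) (F j) (F j)) =
      (∑ i : Fin k, ∑ j : Fin k, g (e i) (e i) (e j) (e j)) +
      (↑(c*s) : ℂ) * BCv g e ν Z +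
      (↑(s^2) : ℂ) *
        (CCv g e ν Z - (1 + (c:ℂ)^2) * g (e ν) (e ν) (e ν) (e ν)
          - (↑(c*s) : ℂ) * X1v g e ν Z + (c:ℂ)^2 * X2v g e ν Z
          + (↑(c*s) : ℂ) * X3v g e ν Z + (s:ℂ)^2 * g Z Z Z Z) := by
  classical
  unfold BCv CCv X1v X2v X3v
  set d := (Finset.univ \ {ν} : Finset (Fin k)) with hd
  have he : ∀ i ∈ d, F i = e i := by
    intro i hi
    exact hFo i (by simpa [hd, Finset.mem_sdiff] using hi)
  have split : ∀ (f : Fin k → ℂ), ∑ i : Fin k, f i = ∑ i ∈ d, f i + f ν :=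
    fun f => Finset.sum_eq_sum_sdiff_singleton_add (Finset.mem_univ ν) f
  rw [split (fun i => ∑ j : Fin k, g (F i) (F i) (F j) (F j)),
      split (fun i => ∑ j : Fin k, g (e i) (e i) (e j) (e j))]
  have inner1 : ∀ i ∈ d, (∑ j : Fin k, g (F i) (F i) (F j) (F j)) =
      (∑ j ∈ d, g (e i) (e i) (e j) (e j)) +
        ((c:ℂ)^2 * g (e i) (e i) (e ν) (e ν) +
          (c*s : ℝ) * (g (e i) (e i) (e ν) Z + g (e i) (e i) Z (e ν)) +
          (s:ℂ)^2 * g (e i) (e i) Z Z) := by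
    intro i hi
    rw [split (fun j => g (F i) (F i) (F j) (F j)), he i hi, hFν, expand34 hg]
    congr 1
    exact Finset.sum_congr rfl (fun j hj => by rw [he j hj])
  have inner2 : (∑ j : Fin k, g (F ν) (F ν) (F j) (F j)) =
      ((c:ℂ)^2 * (∑ j ∈ d, g (e ν) (e ν) (e j) (e j)) +
        (c*s : ℝ) * ((∑ j ∈ d, g (e ν) Z (e j) (e j)) + (∑ j ∈ d, g Z (e ν) (e j) (e j))) +
        (s:ℂ)^2 * (∑ j ∈ d, g Z Z (e j) (e j))) +
      ((c:ℂ)^2 * ((c:ℂ)^2 * g (e ν) (e ν) (e ν) (e ν) +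
          (c*s : ℝ) * (g (e ν) (e ν) (e ν) Z + g (e ν) (e ν) Z (e ν)) +
          (s:ℂ)^2 * g (e ν) (e ν) Z Z) +
        (c*s : ℝ) * (((c:ℂ)^2 * g (e ν) Z (e ν) (e ν) +
            (c*s : ℝ) * (g (e ν) Z (e ν) Z + g (e ν) Z Z (e ν)) +
            (s:ℂ)^2 * g (e ν) Z Z Z) +
          ((c:ℂ)^2 * g Z (e ν) (e ν) (e ν) +
            (c*s : ℝ) * (g Z (e ν) (e ν) Z + g Z (e ν) Z (e ν)) +
            (s:ℂ)^2 * g Z (e ν) Z Z)) +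
        (s:ℂ)^2 * ((c:ℂ)^2 * g Z Z (e ν) (e ν) +
          (c*s : ℝ) * (g Z Z (e ν) Z + g Z Z Z (e ν)) +
          (s:ℂ)^2 * g Z Z Z Z)) := by
    rw [split (fun j => g (F ν) (F ν) (F j) (F j)), hFν]
    congr 1
    · rw [Finset.sum_congr rfl (fun j hj => by rw [he j hj, expand12 hg])]
      simp only [Finset.sum_add_distrib, ← Finset.mul_sum]
    · simp only [expand12 hg, expand34 hg]
  have rhs1 : (∑ i ∈ d, ∑ j : Fin k, g (e i) (e i) (e j) (e j)) =
      ∑ i ∈ d, ((∑ j ∈ d, g (e i) (e i) (e j) (e j)) + g (e i) (e i) (e ν) (e ν)) :=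
    Finset.sum_congr rfl (fun i _ => split _)
  rw [Finset.sum_congr rfl inner1, inner2, rhs1, split (fun j => g (e ν) (e ν) (e j) (e j))]
  simp only [Finset.sum_add_distrib, Finset.sum_sub_distrib, ← Finset.mul_sum]
  have hcs' : (c:ℂ)^2 + (s:ℂ)^2 = 1 := by exact_mod_cast congrArg (Complex.ofReal) hcs
  push_cast
  linear_combination ((∑ j ∈ d, g (e ν) (e ν) (e j) (e j)) +
    (∑ j ∈ d, g (e j) (e j) (e ν) (e ν)) +
    ((c:ℂ)^2 + 1) * g (e ν) (e ν) (e ν) (e ν) +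
    (c:ℂ) * (s:ℂ) * (g (e ν) (e ν) (e ν) Z + g (e ν) (e ν) Z (e ν) +
      g (e ν) Z (e ν) (e ν) + g Z (e ν) (e ν) (e ν))) * hcs'

lemma key_ineq (hg : CurvatureType g) {k : ℕ} (e : Fin k → H) (ν : Fin k) (Z : H)
    (hΔ : ∀ (c s : ℝ), c ^ 2 + s ^ 2 = 1 → ∀ F : Fin k → H,
      F ν = (c:ℂ) • (e ν) + (s:ℂ) • Z → (∀ i, i ≠ ν → F i = e i) →
      (∑ i : Fin k, ∑ j : Fin k, g (e i) (e i) (e j) (e j)).re ≤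
        (∑ i : Fin k, ∑ j : Fin k, g (F i) (F i) (F j) (F j)).re) :
    ∀ (c s : ℝ), c ^ 2 + s ^ 2 = 1 →
      0 ≤ c*s*(BCv g e ν Z).re + s^2*((CCv g e ν Z).re
        - (1+c^2)*(g (e ν) (e ν) (e ν) (e ν)).re - (c*s)*(X1v g e ν Z).re
        + c^2*(X2v g e ν Z).re + (c*s)*(X3v g e ν Z).re + s^2*(g Z Z Z Z).re) := by
  intro c s hcs
  classical
  set F : Fin k → H := fun i => if i = ν then (c:ℂ) • (e ν) + (s:ℂ) • Z else e i with hF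
  have hFν : F ν = (c:ℂ) • (e ν) + (s:ℂ) • Z := by simp [hF]
  have hFo : ∀ i, i ≠ ν → F i = e i := fun i hi => by simp [hF, hi]
  have h := hΔ c s hcs F hFν hFo
  rw [key_identity hg ν e Z c s hcs F hFν hFo] at h
  simp only [Complex.add_re, Complex.sub_re, ← Complex.ofReal_pow, ← Complex.ofReal_one,
    ← Complex.ofReal_add, ← Complex.ofReal_mul, Complex.re_ofReal_mul] at h
  push_cast at h ⊢
  linarith

end Main

section Var
variable {g : H → H → H → H → ℂ}

lemma gsw2 (hsym : KahlerSymmetries g) (a b x : H) : g a b x x = g x x a b := by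
  obtain ⟨s1, s2⟩ := hsym
  rw [s1 a b x x, s2 x b a x, s1 b x x a, s2 x x b a]
  simp

lemma gconj34 (hsym : KahlerSymmetries g) (x z w : H) :
    g x x z w = (starRingEnd ℂ) (g x x w z) := hsym.2 x x z w

lemma second_var (hg : CurvatureType g) (hsym : KahlerSymmetries g) {k : ℕ}
    (e : Fin k → H) (ν : Fin k) (Z : H)
    (hΔ : ∀ (c s : ℝ), c ^ 2 + s ^ 2 = 1 → ∀ F : Fin k → H,
      F ν = (c:ℂ) • (e ν) + (s:ℂ) • Z → (∀ i, i ≠ ν → F i = e i) →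
      (∑ i : Fin k, ∑ j : Fin k, g (e i) (e i) (e j) (e j)).re ≤
        (∑ i : Fin k, ∑ j : Fin k, g (F i) (F i) (F j) (F j)).re) :
    (∑ j : Fin k, g (e ν) (e ν) (e j) (e j)).re ≤
      (∑ j : Fin k, g Z Z (e j) (e j)).re + (g Z Z (e ν) (e ν)).re +
        (g Z (e ν) Z (e ν)).re := by
  classical
  have key := key_ineq hg e ν Z hΔ
  set a := (CCv g e ν Z).re
  set b := (g (e ν) (e ν) (e ν) (e ν)).re
  set x1 := (X1v g e ν Z).re
  set x2 := (X2v g e ν Z).re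
  set x3 := (X3v g e ν Z).re
  set x4 := (g Z Z Z Z).re
  have hψ : ∀ x : ℝ, 0 ≤ x → x < 1 → 0 ≤ a - (1+x)*b + x*x2 + (1-x)*x4 := by
    intro x hx0 hx1
    set c := Real.sqrt x with hc
    set s := Real.sqrt (1-x) with hs
    have hc2 : c^2 = x := Real.sq_sqrt hx0
    have hs2 : s^2 = 1-x := Real.sq_sqrt (by linarith)
    have hcs : c^2 + s^2 = 1 := by rw [hc2, hs2]; ring
    have hcs2 : c^2 + (-s)^2 = 1 := by rw [neg_pow]; simpa using hcs
    have h1 := key c s hcs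
    have h2 := key c (-s) hcs2
    rw [hc2, hs2] at h1
    have hns : (-s)^2 = 1 - x := by rw [neg_pow]; simpa using hs2
    rw [hc2, hns] at h2
    nlinarith [h1, h2, hx1]
  -- affine limit argument: conclude at x = 1
  have haff : 0 ≤ a - 2*b + x2 := by
    by_contra hcon
    push_neg at hcon
    set Cq := -b + x2 - x4 with hCq
    have hψ1 : ∀ x : ℝ, 0 ≤ x → x < 1 →
        a - 2*b + x2 = (a - (1+x)*b + x*x2 + (1-x)*x4) + (1-x)*Cq := by
      intro x _ _; rw [hCq]; ring
    rcases le_or_gt 0 Cq with hC | hC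
    · have h0 := hψ 0 le_rfl one_pos
      have := hψ1 0 le_rfl one_pos
      nlinarith
    · have hq : 0 < (a - 2*b + x2)/(2*Cq) := div_pos_of_neg_of_neg hcon (by linarith)
      set t := min (1/2) ((a - 2*b + x2)/(2*Cq)) with ht
      have ht0 : 0 < t := lt_min (by norm_num) hq
      have ht1 : t ≤ 1/2 := min_le_left _ _
      have ht2 : t ≤ (a - 2*b + x2)/(2*Cq) := min_le_right _ _
      have hx0 : (0:ℝ) ≤ 1 - t := by linarith
      have hx1 : 1 - t < 1 := by linarith
      have h0 := hψ (1-t) hx0 hx1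
      have heq := hψ1 (1-t) hx0 hx1
      have hCne : Cq ≠ 0 := ne_of_lt hC
      have htC : t * Cq ≥ (a - 2*b + x2)/2 := by
        have h' := mul_le_mul_of_nonpos_right ht2 (le_of_lt hC)
        calc t * Cq ≥ ((a - 2*b + x2)/(2*Cq)) * Cq := by linarith [h']
          _ = (a - 2*b + x2)/2 := by field_simp
      simp only [sub_sub_cancel] at heq
      linarith
  -- translate to the goal using symmetries
  have split : ∀ (f : Fin k → ℂ), ∑ i : Fin k, f i = ∑ i ∈ Finset.univ \ {ν}, f i + f ν :=
    fun f => Finset.sum_eq_sum_sdiff_singleton_add (Finset.mem_univ ν) f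
  have hCC : CCv g e ν Z = (2:ℂ) * (∑ j ∈ Finset.univ \ {ν}, g Z Z (e j) (e j)) -
      (2:ℂ) * (∑ j ∈ Finset.univ \ {ν}, g (e ν) (e ν) (e j) (e j)) := by
    unfold CCv
    rw [Finset.sum_congr rfl (fun j _ => by
      rw [gsw2 hsym (e j) (e j) Z, gsw2 hsym (e j) (e j) (e ν)])]
    rw [Finset.sum_sub_distrib, Finset.sum_sub_distrib, Finset.sum_add_distrib]
    ring
  have hX2 : X2v g e ν Z = (4:ℂ) * g Z Z (e ν) (e ν) +
      (g Z (e ν) Z (e ν) + (starRingEnd ℂ) (g Z (e ν) Z (e ν))) := by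
    unfold X2v
    rw [gsw2 hsym (e ν) (e ν) Z, hsym.1 (e ν) Z Z (e ν), hsym.1 Z (e ν) (e ν) Z,
      gsw2 hsym (e ν) (e ν) Z, show g (e ν) Z (e ν) Z = (starRingEnd ℂ) (g Z (e ν) Z (e ν)) from hsym.2 _ _ _ _]
    ring
  have hCCre : a = 2 * (∑ j ∈ Finset.univ \ {ν}, g Z Z (e j) (e j)).re -
      2 * (∑ j ∈ Finset.univ \ {ν}, g (e ν) (e ν) (e j) (e j)).re := by
    show (CCv g e ν Z).re = _
    rw [hCC]; simp [Complex.sub_re, Complex.mul_re]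
  have hX2re : x2 = 4 * (g Z Z (e ν) (e ν)).re + 2 * (g Z (e ν) Z (e ν)).re := by
    show (X2v g e ν Z).re = _
    rw [hX2]; simp [Complex.add_re, Complex.mul_re, Complex.conj_re]; ring
  have hsplitZ : (∑ j : Fin k, g Z Z (e j) (e j)).re =
      (∑ j ∈ Finset.univ \ {ν}, g Z Z (e j) (e j)).re + (g Z Z (e ν) (e ν)).re := by
    rw [split (fun j => g Z Z (e j) (e j))]; simp [Complex.add_re]
  have hsplitA : (∑ j : Fin k, g (e ν) (e ν) (e j) (e j)).re =
      (∑ j ∈ Finset.univ \ {ν}, g (e ν) (e ν) (e j) (e j)).re + b := by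
    rw [split (fun j => g (e ν) (e ν) (e j) (e j))]; exact Complex.add_re _ _
  linarith [haff]

set_option maxHeartbeats 1000000 in
lemma first_var (hg : CurvatureType g) (hsym : KahlerSymmetries g) {k : ℕ}
    (e : Fin k → H) (ν : Fin k) (Z : H)
    (hΔ : ∀ (c s : ℝ), c ^ 2 + s ^ 2 = 1 → ∀ F : Fin k → H,
      F ν = (c:ℂ) • (e ν) + (s:ℂ) • Z → (∀ i, i ≠ ν → F i = e i) →
      (∑ i : Fin k, ∑ j : Fin k, g (e i) (e i) (e j) (e j)).re ≤
        (∑ i : Fin k, ∑ j : Fin k, g (F i) (F i) (F j) (F j)).re) :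
    (∑ j : Fin k, g (e j) (e j) Z (e ν)).re = 0 := by
  classical
  have key := key_ineq hg e ν Z hΔ
  set B := (BCv g e ν Z).re with hB
  set a := (CCv g e ν Z).re
  set b := (g (e ν) (e ν) (e ν) (e ν)).re
  set x1 := (X1v g e ν Z).re
  set x2 := (X2v g e ν Z).re
  set x3 := (X3v g e ν Z).re
  set x4 := (g Z Z Z Z).re
  set M := |a| + 2*|b| + |x1| + |x2| + |x3| + |x4| with hM
  have hMnn : 0 ≤ M := by positivity
  have hbound : ∀ c s : ℝ, c^2 + s^2 = 1 →
      |a - (1+c^2)*b - (c*s)*x1 + c^2*x2 + (c*s)*x3 + s^2*x4| ≤ M := by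
    intro c s hcs
    have key2 : ∀ (r u : ℝ), |r| ≤ 1 → r*u ≤ |u| ∧ -|u| ≤ r*u := by
      intro r u hr
      have h1 : |r*u| ≤ |u| := by
        rw [abs_mul]
        nlinarith [abs_nonneg u, abs_nonneg r]
      exact ⟨(le_abs_self _).trans h1, by nlinarith [neg_abs_le (r*u)]⟩
    have hc1 : c^2 ≤ 1 := by nlinarith [sq_nonneg s]
    have hs1 : s^2 ≤ 1 := by nlinarith [sq_nonneg c]
    have hcs1 : |c*s| ≤ 1 := by
      rw [abs_mul]
      nlinarith [abs_nonneg c, abs_nonneg s, sq_abs c, sq_abs s, sq_nonneg (|c| - |s|)]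
    have k1 := key2 (c*s) x1 hcs1
    have k3 := key2 (c*s) x3 hcs1
    have k2 := key2 (c^2) x2 (by rwa [abs_of_nonneg (sq_nonneg c)])
    have k4 := key2 (s^2) x4 (by rwa [abs_of_nonneg (sq_nonneg s)])
    have kb := key2 (c^2) b (by rwa [abs_of_nonneg (sq_nonneg c)])
    have ha1 := le_abs_self a
    have ha2 := neg_abs_le a
    have hb1 := le_abs_self b
    have hb2 := neg_abs_le b
    rw [hM, abs_le]
    constructor <;>
      [nlinarith [k1.1, k1.2, k2.1, k2.2, k3.1, k3.2, k4.1, k4.2, kb.1, kb.2];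
       nlinarith [k1.1, k1.2, k2.1, k2.2, k3.1, k3.2, k4.1, k4.2, kb.1, kb.2]]
  have hBz : B = 0 := by
    have hx : ∀ x : ℝ, 0 < x → x < 1 → x * (B^2 + M^2) ≤ M^2 := by
      intro x hx0 hx1
      set c := Real.sqrt x with hc
      set s := Real.sqrt (1-x) with hs
      have hc2 : c^2 = x := Real.sq_sqrt (le_of_lt hx0)
      have hs2 : s^2 = 1-x := Real.sq_sqrt (by linarith)
      have hcs : c^2 + s^2 = 1 := by rw [hc2, hs2]; ring
      have hcs2 : c^2 + (-s)^2 = 1 := by rw [neg_pow]; simpa using hcs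
      have h1 := key c s hcs
      have h2 := key c (-s) hcs2
      have hb1 := hbound c s hcs
      have hb2 := hbound c (-s) hcs2
      rw [abs_le] at hb1 hb2
      have hl : -(s^2*M) ≤ c*s*B := by nlinarith [sq_nonneg s, hb1.2]
      have hr : c*s*B ≤ s^2*M := by
        have hn : (-s)^2 = s^2 := by ring
        rw [hn] at h2 hb2
        nlinarith [sq_nonneg s, hb2.2]
      have hsq := sq_le_sq' hl hr
      have hspos : 0 < s^2 := by rw [hs2]; linarith
      have h4 : c^2*s^2*B^2 ≤ s^2*s^2*M^2 := by nlinarith [hsq]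
      have h5 : c^2*B^2 ≤ s^2*M^2 := by nlinarith [hspos, h4]
      rw [hc2, hs2] at h5
      nlinarith [h5]
    by_contra hBne
    have hB2 : 0 < B^2 := by positivity
    have hxx := hx ((M^2 + B^2/2)/(M^2 + B^2)) (by positivity) (by
      rw [div_lt_one (by positivity)]; linarith)
    rw [div_mul_eq_mul_div, mul_comm] at hxx
    have := (div_le_iff₀ (show (0:ℝ) < M^2 + B^2 by positivity)).mp hxx
    nlinarith
  -- now rewrite B as 4 * (∑ j, g (e j)(e j) Z (e ν)).re
  have split : ∀ (f : Fin k → ℂ), ∑ i : Fin k, f i = ∑ i ∈ Finset.univ \ {ν}, f i + f ν :=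
    fun f => Finset.sum_eq_sum_sdiff_singleton_add (Finset.mem_univ ν) f
  have hterm : ∀ j : Fin k, g (e ν) Z (e j) (e j) + g Z (e ν) (e j) (e j) +
      g (e j) (e j) (e ν) Z + g (e j) (e j) Z (e ν) =
      (2:ℂ) * g (e j) (e j) Z (e ν) +
        ((starRingEnd ℂ) (g (e j) (e j) Z (e ν)) + (starRingEnd ℂ) (g (e j) (e j) Z (e ν))) := by
    intro j
    rw [gsw2 hsym (e ν) Z (e j), gsw2 hsym Z (e ν) (e j),
      gconj34 hsym (e j) (e ν) Z]
    ring
  have hBC : BCv g e ν Z = 2*(∑ j : Fin k, g (e j) (e j) Z (e ν)) +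
      (starRingEnd ℂ) (2*(∑ j : Fin k, g (e j) (e j) Z (e ν))) := by
    unfold BCv
    rw [Finset.sum_congr rfl (fun j _ => hterm j),
      show g (e ν) Z (e ν) (e ν) = g (e ν) (e ν) (e ν) Z from gsw2 hsym _ _ _,
      show g Z (e ν) (e ν) (e ν) = g (e ν) (e ν) Z (e ν) from gsw2 hsym _ _ _,
      show g (e ν) (e ν) (e ν) Z = (starRingEnd ℂ) (g (e ν) (e ν) Z (e ν)) from gconj34 hsym _ _ _,
      split (fun j => g (e j) (e j) Z (e ν))]
    simp only [map_add, map_mul, map_sum, map_ofNat, Finset.sum_add_distrib, ← Finset.mul_sum]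
    ring
  have hBeq : (BCv g e ν Z).re = 4 * (∑ j : Fin k, g (e j) (e j) Z (e ν)).re := by
    rw [hBC]
    simp [Complex.add_re, Complex.conj_re, Complex.mul_re]
    ring
  rw [hB, hBeq] at hBz
  linarith

end Var

section Extra
variable {H : Type*} [NormedAddCommGroup H] [InnerProductSpace ℂ H]
variable {g : H → H → H → H → ℂ}

lemma gzero3 (hg : CurvatureType g) (x y w : H) : g x y 0 w = 0 := by
  have h := hg.2.2.2.2.2.1 0 x y 0 w
  simpa using h

lemma gzero4 (hg : CurvatureType g) (x y z : H) : g x y z 0 = 0 := by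
  have h := hg.2.2.2.2.2.2.2 0 x y z 0
  simpa using h

open scoped InnerProductSpace in
lemma onb_family {k : ℕ} (e : Fin k → H) (Z : H) (ν : Fin k) (c s : ℝ)
    (hcs : c ^ 2 + s ^ 2 = 1)
    (hone : ∀ i j, ⟪e i, e j⟫_ℂ = if i = j then 1 else 0)
    (hZZ : ⟪Z, Z⟫_ℂ = 1) (hZe : ∀ i, ⟪e i, Z⟫_ℂ = 0) :
    Orthonormal ℂ (fun i => if i = ν then (c:ℂ) • (e ν) + (s:ℂ) • Z else e i) := by
  have hZe' : ∀ i, ⟪Z, e i⟫_ℂ = 0 := fun i => by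
    rw [← inner_conj_symm, hZe i]; simp
  rw [orthonormal_iff_ite]
  intro i j
  by_cases hi : i = ν <;> by_cases hj : j = ν <;>
    simp only [hi, hj, if_pos, if_neg, ite_true, ite_false] <;>
    [skip; skip; skip; exact hone i j]
  · simp only [inner_add_left, inner_add_right, inner_smul_left, inner_smul_right,
      hone ν ν, hZZ, hZe ν, hZe' ν, Complex.conj_ofReal, if_true, eq_self_iff_true]
    rw [show ((c:ℂ) * ((c:ℂ) * 1 + (s:ℂ) * 0) + (s:ℂ) * ((c:ℂ) * 0 + (s:ℂ) * 1)) = ((c^2 + s^2 : ℝ) : ℂ) by push_cast; ring, hcs]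
    norm_num
  · rw [if_neg (fun h => hj h.symm), inner_add_left, inner_smul_left, inner_smul_left, hone ν j,
      if_neg (fun h => hj (h : ν = j).symm), hZe' j]
    ring
  · rw [inner_add_right, inner_smul_right, inner_smul_right, hone i ν, if_neg hi, hZe i]
    ring

end Extra

lemma exists_onb_span {n k : ℕ} (v : Fin k → EuclideanSpace ℂ (Fin n)) (hv : Orthonormal ℂ v) :
    ∃ (Q : Submodule ℂ (EuclideanSpace ℂ (Fin n))) (B : OrthonormalBasis (Fin k) ℂ Q),
      Module.finrank ℂ Q = k ∧ ∀ i, (B i : EuclideanSpace ℂ (Fin n)) = v i := by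
  classical
  set Q := Submodule.span ℂ (Set.range v) with hQ
  have hmem : ∀ i, v i ∈ Q := fun i => Submodule.subset_span (Set.mem_range_self i)
  set w : Fin k → Q := fun i => ⟨v i, hmem i⟩ with hw
  have hworth : Orthonormal ℂ w := by
    constructor
    · intro i; have := hv.1 i; simpa [hw, Submodule.norm_coe] using this
    · intro i j hij; have := hv.2 hij; simpa [hw, Submodule.coe_inner] using this
  have hspan : ⊤ ≤ Submodule.span ℂ (Set.range w) := by
    have hmap : Submodule.map Q.subtype (Submodule.span ℂ (Set.range w)) =
        Submodule.map Q.subtype ⊤ := by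
      rw [Submodule.map_span, Submodule.map_top, Submodule.range_subtype]
      congr 1
      ext x
      constructor
      · rintro ⟨y, ⟨i, rfl⟩, rfl⟩; exact ⟨i, rfl⟩
      · rintro ⟨i, rfl⟩; exact ⟨w i, ⟨i, rfl⟩, rfl⟩
    exact le_of_eq (Submodule.map_injective_of_injective Q.injective_subtype hmap).symm
  refine ⟨Q, OrthonormalBasis.mk hworth hspan, ?_, fun i => by simp [OrthonormalBasis.coe_mk, hw]⟩
  have : Module.finrank ℂ Q = Fintype.card (Fin k) :=
    Module.finrank_eq_card_basis (OrthonormalBasis.mk hworth hspan).toBasis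
  simpa using this

set_option maxHeartbeats 1000000 in
open scoped InnerProductSpace in
/-- pointwise core of the uniform RC `k`-positivity theorem. If
`Ric_k ≥ D > 0`, i.e. `Σ_i g(X,X,E'_i,E'_i) ≥ D‖X‖²` for every `k`-dimensional subspace with
orthonormal basis `{E'_i}` and every `X` in it, and `P` is a `k`-dimensional subspace
minimizing `s`, then for every orthonormal basis `{E_i}` of `P` and every `X ∈ ℂ^n`,
`Σ_i g(E_i,E_i,X,X) ≥ (kD/(k+1))·‖X‖²`. -/
theorem stmt_14 (n k : ℕ) (hk : 1 ≤ k) (hkn : k ≤ n)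
    (g : EuclideanSpace ℂ (Fin n) → EuclideanSpace ℂ (Fin n) → EuclideanSpace ℂ (Fin n) →
      EuclideanSpace ℂ (Fin n) → ℂ)
    (hg : CurvatureType g) (hsym : KahlerSymmetries g)
    (D : ℝ) (hD : 0 < D)
    (hric : ∀ (Q : Submodule ℂ (EuclideanSpace ℂ (Fin n))),
      Module.finrank ℂ Q = k → ∀ (E' : OrthonormalBasis (Fin k) ℂ Q)
        (X : EuclideanSpace ℂ (Fin n)), X ∈ Q →
        D * ‖X‖ ^ 2 ≤ (∑ i : Fin k, g X X (E' i) (E' i)).re)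
    (P : Submodule ℂ (EuclideanSpace ℂ (Fin n))) (hP : Module.finrank ℂ P = k)
    (hmin :
      ∀ (E : OrthonormalBasis (Fin k) ℂ P) (Q : Submodule ℂ (EuclideanSpace ℂ (Fin n))),
        Module.finrank ℂ Q = k → ∀ E' : OrthonormalBasis (Fin k) ℂ Q,
        (∑ i : Fin k, ∑ j : Fin k, g (E i) (E i) (E j) (E j)).re ≤
          (∑ i : Fin k, ∑ j : Fin k, g (E' i) (E' i) (E' j) (E' j)).re)
    (E : OrthonormalBasis (Fin k) ℂ P) (X : EuclideanSpace ℂ (Fin n)) :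
    ((k : ℝ) * D / ((k : ℝ) + 1)) * ‖X‖ ^ 2 ≤ (∑ i : Fin k, g (E i) (E i) X X).re := by
  classical
  have hk1 : (0:ℝ) < (k:ℝ) + 1 := by positivity
  have heP : ∀ i : Fin k, ((E i : EuclideanSpace ℂ (Fin n))) ∈ P := fun i => (E i).2
  have hone : ∀ i j : Fin k,
      ⟪(E i : EuclideanSpace ℂ (Fin n)), (E j : EuclideanSpace ℂ (Fin n))⟫_ℂ =
        if i = j then 1 else 0 := by
    intro i j
    rw [← Submodule.coe_inner]
    exact orthonormal_iff_ite.mp E.orthonormal i j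
  have hEn : ∀ i : Fin k, ‖(E i : EuclideanSpace ℂ (Fin n))‖ = 1 := by
    intro i
    rw [Submodule.norm_coe]
    exact E.orthonormal.1 i
  -- the minimality inequality for variation families
  have hΔ : ∀ (Z : EuclideanSpace ℂ (Fin n)), ‖Z‖ = 1 → Z ∈ Pᗮ → ∀ ν : Fin k,
      ∀ (c s : ℝ), c ^ 2 + s ^ 2 = 1 → ∀ F : Fin k → EuclideanSpace ℂ (Fin n),
      F ν = (c:ℂ) • ((E ν : EuclideanSpace ℂ (Fin n))) + (s:ℂ) • Z →
      (∀ i, i ≠ ν → F i = (E i : EuclideanSpace ℂ (Fin n))) →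
      (∑ i : Fin k, ∑ j : Fin k, g (E i) (E i) (E j) (E j)).re ≤
        (∑ i : Fin k, ∑ j : Fin k, g (F i) (F i) (F j) (F j)).re := by
    intro Z hZn hZP ν c s hcs F hFν hFo
    have hZZ : ⟪Z, Z⟫_ℂ = 1 := by
      rw [inner_self_eq_norm_sq_to_K, hZn]
      norm_num
    have hZe : ∀ i : Fin k, ⟪(E i : EuclideanSpace ℂ (Fin n)), Z⟫_ℂ = 0 := fun i =>
      (Submodule.mem_orthogonal P Z).mp hZP _ (heP i)
    have horth : Orthonormal ℂ F := by
      have hFeq : F = fun i => if i = ν then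
          (c:ℂ) • ((E ν : EuclideanSpace ℂ (Fin n))) + (s:ℂ) • Z
          else (E i : EuclideanSpace ℂ (Fin n)) := by
        funext i
        by_cases hi : i = ν
        · rw [hi, hFν, if_pos rfl]
        · rw [hFo i hi, if_neg hi]
      rw [hFeq]
      exact onb_family (fun i => (E i : EuclideanSpace ℂ (Fin n))) Z ν c s hcs hone hZZ hZe
    obtain ⟨Q, Bq, hQk, hBq⟩ := exists_onb_span F horth
    have hm := hmin E Q hQk Bq
    simpa only [hBq] using hm
  -- first variation : T vanishing for unit normal vectors
  have hTunit : ∀ (Z : EuclideanSpace ℂ (Fin n)), ‖Z‖ = 1 → Z ∈ Pᗮ → ∀ ν : Fin k,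
      (∑ j : Fin k, g (E j) (E j) Z (E ν)) = 0 := by
    intro Z hZn hZP ν
    have hu : ∀ u : ℂ, ‖u‖ = 1 →
        (∑ j : Fin k, g (E j) (E j) (u • Z) (E ν)).re = 0 := by
      intro u hun
      have hZn' : ‖u • Z‖ = 1 := by rw [norm_smul, hun, hZn, one_mul]
      have hZP' : u • Z ∈ Pᗮ := Submodule.smul_mem _ u hZP
      exact first_var hg hsym (fun i => (E i : EuclideanSpace ℂ (Fin n))) ν (u • Z)
        (hΔ (u • Z) hZn' hZP' ν)
    have hlin : ∀ u : ℂ, (∑ j : Fin k, g (E j) (E j) (u • Z) (E ν)) =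
        u * ∑ j : Fin k, g (E j) (E j) Z (E ν) := by
      intro u
      rw [Finset.mul_sum]
      exact Finset.sum_congr rfl fun j _ => hg.2.2.2.2.2.1 u _ _ _ _
    have h1 := hu 1 (by norm_num)
    have hI := hu Complex.I (by simp)
    rw [hlin 1, one_mul] at h1
    rw [hlin Complex.I] at hI
    simp only [Complex.mul_re, Complex.I_re, Complex.I_im, zero_mul, one_mul, zero_sub,
      neg_eq_zero] at hI
    exact Complex.ext h1 hI
  have hT : ∀ (Z : EuclideanSpace ℂ (Fin n)), Z ∈ Pᗮ → ∀ ν : Fin k,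
      (∑ j : Fin k, g (E j) (E j) Z (E ν)) = 0 := by
    intro Z hZP ν
    by_cases hZ0 : Z = 0
    · rw [hZ0]
      exact Finset.sum_eq_zero fun j _ => gzero3 hg _ _ _
    · have h0 := hTunit ((‖Z‖⁻¹ : ℂ) • Z) (norm_smul_inv_norm hZ0)
        (Submodule.smul_mem _ _ hZP) ν
      have hZeq : ((‖Z‖ : ℂ)) • ((‖Z‖⁻¹ : ℂ) • Z) = Z := by
        rw [smul_smul, ← Complex.ofReal_inv, ← Complex.ofReal_mul,
          mul_inv_cancel₀ (norm_ne_zero_iff.mpr hZ0)]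
        simp
      calc (∑ j : Fin k, g (E j) (E j) Z (E ν))
          = ∑ j : Fin k, g (E j) (E j) (((‖Z‖ : ℂ)) • ((‖Z‖⁻¹ : ℂ) • Z)) (E ν) := by rw [hZeq]
        _ = (‖Z‖ : ℂ) * ∑ j : Fin k, g (E j) (E j) ((‖Z‖⁻¹ : ℂ) • Z) (E ν) := by
            rw [Finset.mul_sum]
            exact Finset.sum_congr rfl fun j _ => hg.2.2.2.2.2.1 _ _ _ _ _
        _ = 0 := by rw [h0, mul_zero]
  -- span characterization of P
  have hPs : Submodule.span ℂ
      (Set.range (fun i : Fin k => (E i : EuclideanSpace ℂ (Fin n)))) = P := by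
    have hb : Submodule.span ℂ (Set.range (E.toBasis)) = (⊤ : Submodule ℂ P) :=
      E.toBasis.span_eq
    have h2 := congrArg (Submodule.map P.subtype) hb
    rw [Submodule.map_span, Submodule.map_top, Submodule.range_subtype] at h2
    have h3 : (⇑P.subtype '' Set.range ⇑E.toBasis) =
        Set.range (fun i : Fin k => ((E i : EuclideanSpace ℂ (Fin n)))) := by
      ext x
      constructor
      · rintro ⟨y, ⟨i, rfl⟩, rfl⟩
        exact ⟨i, by simp [OrthonormalBasis.coe_toBasis]⟩
      · rintro ⟨i, rfl⟩
        exact ⟨E.toBasis i, ⟨i, rfl⟩, by simp [OrthonormalBasis.coe_toBasis]⟩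
    rw [h3] at h2
    exact h2
  -- cross terms vanish
  have hTW : ∀ (Z : EuclideanSpace ℂ (Fin n)), Z ∈ Pᗮ →
      ∀ (W : EuclideanSpace ℂ (Fin n)), W ∈ P →
      (∑ j : Fin k, g (E j) (E j) Z W) = 0 := by
    intro Z hZP W hW
    rw [← hPs] at hW
    induction hW using Submodule.span_induction with
    | mem x h =>
        obtain ⟨i, rfl⟩ := h
        exact hT Z hZP i
    | zero => exact Finset.sum_eq_zero fun j _ => gzero4 hg _ _ _
    | add x y hx hy hpx hpy =>
        rw [Finset.sum_congr rfl fun j _ => hg.2.2.2.2.2.2.1 _ _ _ x y,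
          Finset.sum_add_distrib, hpx, hpy, add_zero]
    | smul a x hx hpx =>
        rw [Finset.sum_congr rfl fun j _ => hg.2.2.2.2.2.2.2 a _ _ _ x,
          ← Finset.mul_sum, hpx, mul_zero]
  -- second variation for unit normal vectors
  have hSVunit : ∀ (Z : EuclideanSpace ℂ (Fin n)), ‖Z‖ = 1 → Z ∈ Pᗮ →
      (k:ℝ) * D ≤ ((k:ℝ)+1) * (∑ j : Fin k, g Z Z (E j) (E j)).re := by
    intro Z hZn hZP
    have hν : ∀ ν : Fin k, D ≤ (∑ j : Fin k, g Z Z (E j) (E j)).re +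
        (g Z Z (E ν) (E ν)).re := by
      intro ν
      have hrot : ∃ u : ℂ, ‖u‖ = 1 ∧
          (u^2 * g Z (E ν) Z (E ν)).re ≤ 0 := by
        by_cases hG0 : g Z (E ν) Z (E ν) = 0
        · exact ⟨1, by norm_num, by simp [hG0]⟩
        · set G := g Z (E ν) Z (E ν) with hG
          set v : ℂ := -((‖G‖ : ℂ) / G) with hv
          have habsne : (‖G‖ : ℝ) ≠ 0 := by
            simpa using hG0
          have hva : ‖v‖ = 1 := by
            rw [hv]
            rw [norm_neg, norm_div, Complex.norm_real,
              norm_norm]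
            field_simp
          set u := Complex.exp ((↑(Complex.arg v / 2) : ℂ) * Complex.I) with hu
          have hun : ‖u‖ = 1 := Complex.norm_exp_ofReal_mul_I _
          have hu2 : u^2 = v := by
            rw [hu, ← Complex.exp_nat_mul]
            rw [show ((2:ℕ):ℂ) * ((↑(Complex.arg v / 2) : ℂ) * Complex.I) =
              (↑(Complex.arg v) : ℂ) * Complex.I by push_cast; ring]
            conv_rhs => rw [← Complex.norm_mul_exp_arg_mul_I v]
            rw [hva]
            simp
          refine ⟨u, hun, ?_⟩
          rw [hu2, hv]
          have hne : G ≠ 0 := hG0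
          rw [show -((‖G‖ : ℂ) / G) * G = -(‖G‖ : ℂ) by field_simp]
          simp only [Complex.neg_re, Complex.ofReal_re, neg_nonpos]
          exact norm_nonneg _
      obtain ⟨u, hun, hneg⟩ := hrot
      have huu : (starRingEnd ℂ) u * u = 1 := by
        rw [mul_comm, Complex.mul_conj, Complex.normSq_eq_norm_sq,
          hun]
        norm_num
      have hZn' : ‖u • Z‖ = 1 := by rw [norm_smul, hun, hZn, one_mul]
      have hZP' : u • Z ∈ Pᗮ := Submodule.smul_mem _ u hZP
      have hsv := second_var hg hsym (fun i => (E i : EuclideanSpace ℂ (Fin n))) ν (u • Z)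
        (hΔ (u • Z) hZn' hZP' ν)
      have hGG : ∀ x y, g (u • Z) (u • Z) x y = g Z Z x y := by
        intro x y
        rw [hg.2.1 u, hg.2.2.2.1 u, ← mul_assoc, mul_comm u, huu, one_mul]
      have hGrot : g (u • Z) (E ν) (u • Z) (E ν) = u^2 * g Z (E ν) Z (E ν) := by
        rw [hg.2.1 u, hg.2.2.2.2.2.1 u, ← mul_assoc]
        ring
      rw [Finset.sum_congr rfl (fun j _ => hGG _ _), hGG, hGrot] at hsv
      have hricν := hric P hP E ((E ν : EuclideanSpace ℂ (Fin n))) (heP ν)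
      rw [hEn ν] at hricν
      have h1 : D ≤ (∑ j : Fin k, g (E ν) (E ν) (E j) (E j)).re := by simpa using hricν
      linarith [hsv, hneg, h1]
    have hsum := Finset.sum_le_sum (fun ν (_ : ν ∈ Finset.univ) => hν ν)
    rw [Finset.sum_const, Finset.card_univ, Fintype.card_fin, nsmul_eq_mul,
      Finset.sum_add_distrib, Finset.sum_const, Finset.card_univ, Fintype.card_fin,
      nsmul_eq_mul, ← Complex.re_sum] at hsum
    linarith [hsum]
  -- second variation, general normal vectors
  have hSV : ∀ (Z : EuclideanSpace ℂ (Fin n)), Z ∈ Pᗮ →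
      ((k:ℝ) * D / ((k:ℝ)+1)) * ‖Z‖^2 ≤ (∑ j : Fin k, g (E j) (E j) Z Z).re := by
    intro Z hZP
    by_cases hZ0 : Z = 0
    · rw [hZ0, Finset.sum_eq_zero fun j _ => gzero3 hg _ _ _]
      simp
    · have h1 := hSVunit ((‖Z‖⁻¹ : ℂ) • Z) (norm_smul_inv_norm hZ0)
        (Submodule.smul_mem _ _ hZP)
      have hswS : (∑ j : Fin k, g ((‖Z‖⁻¹ : ℂ) • Z) ((‖Z‖⁻¹ : ℂ) • Z) (E j) (E j)) =
          ∑ j : Fin k, g (E j) (E j) ((‖Z‖⁻¹ : ℂ) • Z) ((‖Z‖⁻¹ : ℂ) • Z) :=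
        Finset.sum_congr rfl fun j _ => gsw2 hsym _ _ _
      rw [show (∑ j : Fin k, g ((‖Z‖⁻¹ : ℂ) • Z) ((‖Z‖⁻¹ : ℂ) • Z) (E j) (E j)).re =
          (∑ j : Fin k, g (E j) (E j) ((‖Z‖⁻¹ : ℂ) • Z) ((‖Z‖⁻¹ : ℂ) • Z)).re
          from congrArg Complex.re hswS] at h1
      have hZeq : ((‖Z‖ : ℂ)) • ((‖Z‖⁻¹ : ℂ) • Z) = Z := by
        rw [smul_smul, ← Complex.ofReal_inv, ← Complex.ofReal_mul,
          mul_inv_cancel₀ (norm_ne_zero_iff.mpr hZ0)]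
        simp
      have hscale : (∑ j : Fin k, g (E j) (E j) Z Z) =
          ((‖Z‖^2 : ℝ) : ℂ) * ∑ j : Fin k,
            g (E j) (E j) ((‖Z‖⁻¹ : ℂ) • Z) ((‖Z‖⁻¹ : ℂ) • Z) := by
        rw [Finset.mul_sum]
        refine Finset.sum_congr rfl fun j _ => ?_
        conv_lhs => rw [← hZeq]
        rw [hg.2.2.2.2.2.1, hg.2.2.2.2.2.2.2, Complex.conj_ofReal]
        push_cast
        ring
      rw [hscale, Complex.re_ofReal_mul]
      have hn2 : (0:ℝ) ≤ ‖Z‖^2 := sq_nonneg _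
      rw [div_mul_eq_mul_div, div_le_iff₀ hk1]
      nlinarith [h1, hn2]
  -- assembly
  have hYP : (↑(P.orthogonalProjectionOnto X) : EuclideanSpace ℂ (Fin n)) ∈ P :=
    Submodule.coe_mem _
  set Y : EuclideanSpace ℂ (Fin n) := ↑(P.orthogonalProjectionOnto X) with hYdef
  set Zz : EuclideanSpace ℂ (Fin n) := X - Y with hZzdef
  have hZP : Zz ∈ Pᗮ := Submodule.sub_starProjection_mem_orthogonal (K := P) X
  have hXYZ : X = Y + Zz := by rw [hZzdef]; abel
  have hexp : (∑ j : Fin k, g (E j) (E j) X X) =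
      ((∑ j : Fin k, g (E j) (E j) Y Y) + (∑ j : Fin k, g (E j) (E j) Y Zz)) +
      ((∑ j : Fin k, g (E j) (E j) Zz Y) + (∑ j : Fin k, g (E j) (E j) Zz Zz)) := by
    rw [← Finset.sum_add_distrib, ← Finset.sum_add_distrib, ← Finset.sum_add_distrib]
    refine Finset.sum_congr rfl fun j _ => ?_
    conv_lhs => rw [hXYZ]
    rw [hg.2.2.2.2.1, hg.2.2.2.2.2.2.1, hg.2.2.2.2.2.2.1]
  have hc1 : (∑ j : Fin k, g (E j) (E j) Zz Y) = 0 := hTW Zz hZP Y hYP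
  have hc2 : (∑ j : Fin k, g (E j) (E j) Y Zz) = 0 := by
    rw [Finset.sum_congr rfl fun j _ => gconj34 hsym
      ((E j : EuclideanSpace ℂ (Fin n))) Y Zz, ← map_sum, hc1, map_zero]
  have hYb : D * ‖Y‖^2 ≤ (∑ j : Fin k, g (E j) (E j) Y Y).re := by
    have h := hric P hP E Y hYP
    calc D * ‖Y‖^2 ≤ (∑ i : Fin k, g Y Y (E i) (E i)).re := h
      _ = (∑ j : Fin k, g (E j) (E j) Y Y).re := by
          rw [Finset.sum_congr rfl fun j _ =>
            (gsw2 hsym ((E j : EuclideanSpace ℂ (Fin n)))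
              ((E j : EuclideanSpace ℂ (Fin n))) Y).symm]
  have hZb := hSV Zz hZP
  have hinner : ⟪Y, Zz⟫_ℂ = 0 := (Submodule.mem_orthogonal P Zz).mp hZP Y hYP
  have hnorm : ‖X‖^2 = ‖Y‖^2 + ‖Zz‖^2 := by
    rw [hXYZ, @norm_add_sq ℂ _ _ _ _ Y Zz, hinner]
    simp
  have hre : (∑ j : Fin k, g (E j) (E j) X X).re =
      (∑ j : Fin k, g (E j) (E j) Y Y).re + (∑ j : Fin k, g (E j) (E j) Zz Zz).re := by
    rw [hexp, hc1, hc2]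
    simp [Complex.add_re]
  have hcoef : (k:ℝ)*D/((k:ℝ)+1) ≤ D := by
    rw [div_le_iff₀ hk1]
    nlinarith [hD.le, (Nat.cast_nonneg k : (0:ℝ) ≤ (k:ℝ))]
  rw [hre, hnorm]
  nlinarith [hYb, hZb, sq_nonneg ‖Y‖,
    mul_nonneg (sub_nonneg.mpr hcoef) (sq_nonneg ‖Y‖)]
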